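/- arXiv:2310.00864 — 2 statements merged into one kernel-verified Lean document; each statement's English description precedes it below -/
import Mathlib

section
/- (Pointwise surrogate domination, core of Theorem 2.) Let K ≥ 1 be an integer, w : {−1,1}^K → ℝ, and z ∈ ℝ^K with z_k ≠ 0 for all k. Let a* be the unique element of {−1,1}^K with (a*)_k z_k > 0 for all k. If w(a*) ≥ 0, then the weighted 0-1 risk is bounded by the conditional ψ-risk: Σ_{a ∈ {−1,1}^K, a ≠ a*} w(a) ≤ Σ_{a ∈ {−1,1}^K} w(a) ψ(a ⊙ z). -/
/-- `Tgen s z = max (s - z 1, ..., s - z K, 0)`, the function `T_s` from the paper. -/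
noncomputable def Tgen {K : ℕ} (s : ℝ) (z : Fin K → ℝ) : ℝ :=
  Finset.fold (· ⊔ ·) 0 (fun k => s - z k) Finset.univ

/-- The generalized ψ-loss: `ψ z = T₁ z - T₀ z`. -/
noncomputable def psiLoss {K : ℕ} (z : Fin K → ℝ) : ℝ :=
  Tgen 1 z - Tgen 0 z

open scoped Classical in
/-- The set of sign vectors `{-1, 1}^K`, as a finset of `Fin K → ℝ`. -/
noncomputable def signVecs (K : ℕ) : Finset (Fin K → ℝ) :=
  Finset.image (fun (b : Fin K → Bool) (k : Fin K) => if b k then (1 : ℝ) else -1)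
    Finset.univ

lemma mem_signVecs {K : ℕ} (a : Fin K → ℝ) :
    a ∈ signVecs K ↔ ∀ k, a k = 1 ∨ a k = -1 := by
  classical
  unfold signVecs
  constructor
  · intro h k
    rw [Finset.mem_image] at h
    obtain ⟨b, -, rfl⟩ := h
    by_cases hb : b k <;> simp [hb]
  · intro h
    rw [Finset.mem_image]
    refine ⟨fun k => decide (a k = 1), Finset.mem_univ _, ?_⟩
    funext k
    rcases h k with h1 | h1 <;> norm_num [h1]

lemma signVecs_nonempty (K : ℕ) : (signVecs K).Nonempty :=
  ⟨fun _ => 1, (mem_signVecs _).mpr fun _ => Or.inl rfl⟩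

lemma Tgen_eq_fold_max {K : ℕ} (s : ℝ) (z : Fin K → ℝ) :
    Tgen s z = Finset.fold max 0 (fun k => s - z k) Finset.univ := by
  unfold Tgen
  congr 1

lemma Tgen_nonneg {K : ℕ} (s : ℝ) (z : Fin K → ℝ) : 0 ≤ Tgen s z := by
  rw [Tgen_eq_fold_max, Finset.le_fold_max]
  exact Or.inl le_rfl

lemma le_Tgen {K : ℕ} (s : ℝ) (z : Fin K → ℝ) (k : Fin K) : s - z k ≤ Tgen s z := by
  rw [Tgen_eq_fold_max, Finset.le_fold_max]
  exact Or.inr ⟨k, Finset.mem_univ k, le_rfl⟩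

lemma psiLoss_nonneg {K : ℕ} (z : Fin K → ℝ) : 0 ≤ psiLoss z := by
  unfold psiLoss
  rw [sub_nonneg, Tgen_eq_fold_max 0, Finset.fold_max_le]
  refine ⟨Tgen_nonneg 1 z, fun k _ => le_trans ?_ (le_Tgen 1 z k)⟩
  linarith

lemma psiLoss_eq_one {K : ℕ} (z : Fin K → ℝ) (k0 : Fin K) (h : z k0 < 0) :
    psiLoss z = 1 := by
  have h1 : Tgen 1 z ≤ 1 + Tgen 0 z := by
    rw [Tgen_eq_fold_max 1, Finset.fold_max_le]
    refine ⟨by linarith [Tgen_nonneg 0 z], fun k _ => ?_⟩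
    have := le_Tgen 0 z k
    linarith
  have h2 : Tgen 0 z ≤ Tgen 1 z - 1 := by
    rw [Tgen_eq_fold_max 0, Finset.fold_max_le]
    have hk0 := le_Tgen 1 z k0
    refine ⟨by linarith, fun k _ => ?_⟩
    have := le_Tgen 1 z k
    linarith
  unfold psiLoss
  linarith

open scoped Classical in
theorem stmt14 (K : ℕ) (hK : 1 ≤ K) (w : (Fin K → ℝ) → ℝ) (z : Fin K → ℝ)
    (hz : ∀ k, z k ≠ 0) (astar : Fin K → ℝ) (hmem : astar ∈ signVecs K)
    (hstar : ∀ k, 0 < astar k * z k) (hw : 0 ≤ w astar) :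
    ∑ a ∈ (signVecs K).filter (fun a => a ≠ astar), w a
      ≤ ∑ a ∈ signVecs K, w a * psiLoss (fun k => a k * z k) := by
  classical
  have hfil : (signVecs K).filter (fun a => a ≠ astar) = (signVecs K).erase astar :=
    Finset.filter_ne' _ _
  rw [hfil, ← Finset.sum_erase_add (signVecs K) _ hmem]
  have hterm : ∀ a ∈ (signVecs K).erase astar,
      w a = w a * psiLoss (fun k => a k * z k) := by
    intro a ha
    obtain ⟨hne, hmema⟩ := Finset.mem_erase.mp ha
    have hexists : ∃ k, a k * z k < 0 := by
      by_contra hcon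
      push_neg at hcon
      apply hne
      funext k
      have hs := hstar k
      have hc := hcon k
      have hzk := (hz k).lt_or_gt
      rcases (mem_signVecs a).mp hmema k with h1 | h1 <;>
        rcases (mem_signVecs astar).mp hmem k with h2 | h2 <;>
        rw [h1] at hc ⊢ <;> rw [h2] at hs ⊢ <;>
        rcases hzk with hzk | hzk <;> nlinarith
    obtain ⟨k, hk⟩ := hexists
    rw [psiLoss_eq_one _ k hk, mul_one]
  have hsum : ∑ a ∈ (signVecs K).erase astar, w a
      = ∑ a ∈ (signVecs K).erase astar, w a * psiLoss (fun k => a k * z k) :=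
    Finset.sum_congr rfl hterm
  rw [hsum]
  have : 0 ≤ w astar * psiLoss (fun k => astar k * z k) :=
    mul_nonneg hw (psiLoss_nonneg _)
  linarith
end

section
/- (Fisher consistency of residual weighted learning, integrated form of Theorem 1.) Let K ≥ 1 be an integer, (X, Σ_X, μ) a measure space, and W : X × {−1,1}^K → ℝ such that x ↦ W(x,a) is measurable and integrable for each a ∈ {−1,1}^K. Let W̄(x) = 2^{−K} Σ_{a ∈ {−1,1}^K} W(x,a), and assume that for μ-a.e. x the function a ↦ W(x,a) attains its maximum at a unique point a₀(x). Then for every measurable f : X → ℝ^K with x ↦ Σ_a (W(x,a) − W̄(x)) ψ(a ⊙ f(x)) integrable, ∫ Σ_{a} (W(x,a) − W̄(x)) ψ(a ⊙ f(x)) dμ(x) ≥ ∫ (Σ_{a} (W(x,a) − W̄(x)) − (W(x, a₀(x)) − W̄(x))) dμ(x), with equality if and only if for μ-a.e. x, a₀(x)_k f(x)_k ≥ 1 for all k = 1, …, K; in particular any minimizer f of the residual-weighted ψ-risk satisfies sign(f(x)) = a₀(x) μ-a.e. -/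
section Aux

lemma tgen_le {K : ℕ} {s c : ℝ} {z : Fin K → ℝ} :
    Tgen s z ≤ c ↔ 0 ≤ c ∧ ∀ k, s - z k ≤ c := by
  show Finset.fold max 0 _ _ ≤ c ↔ _
  rw [Finset.fold_max_le]; simp

lemma le_tgen {K : ℕ} {s c : ℝ} {z : Fin K → ℝ} :
    c ≤ Tgen s z ↔ c ≤ 0 ∨ ∃ k, c ≤ s - z k := by
  show c ≤ Finset.fold max 0 _ _ ↔ _
  rw [Finset.le_fold_max]; simp

lemma tgen_nonneg {K : ℕ} {s : ℝ} {z : Fin K → ℝ} : 0 ≤ Tgen s z :=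
  le_tgen.mpr (Or.inl le_rfl)

lemma sub_le_tgen {K : ℕ} {s : ℝ} {z : Fin K → ℝ} (k : Fin K) : s - z k ≤ Tgen s z :=
  le_tgen.mpr (Or.inr ⟨k, le_rfl⟩)

lemma psi_nonneg {K : ℕ} {z : Fin K → ℝ} : 0 ≤ psiLoss z := by
  have h : Tgen 0 z ≤ Tgen 1 z := by
    rw [tgen_le]
    exact ⟨tgen_nonneg, fun k => le_tgen.mpr (Or.inr ⟨k, by linarith⟩)⟩
  simpa [psiLoss] using h

lemma psi_le_one {K : ℕ} {z : Fin K → ℝ} : psiLoss z ≤ 1 := by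
  have h : Tgen 1 z ≤ Tgen 0 z + 1 := by
    rw [tgen_le]
    refine ⟨by have := tgen_nonneg (s := (0:ℝ)) (z := z); linarith, fun k => ?_⟩
    have := sub_le_tgen (s := (0:ℝ)) (z := z) k
    linarith
  simp only [psiLoss]; linarith

lemma psi_eq_zero_iff {K : ℕ} {z : Fin K → ℝ} : psiLoss z = 0 ↔ ∀ k, 1 ≤ z k := by
  constructor
  · intro h
    by_contra hc
    push_neg at hc
    obtain ⟨k, hk⟩ := hc
    obtain ⟨k₀, -, hk₀⟩ := Finset.exists_min_image Finset.univ z ⟨k, Finset.mem_univ k⟩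
    have hk₀k : z k₀ ≤ z k := hk₀ k (Finset.mem_univ k)
    have h1 : 1 - z k₀ ≤ Tgen 1 z := sub_le_tgen k₀
    have h0 : Tgen 0 z ≤ max (-z k₀) 0 := by
      rw [tgen_le]
      refine ⟨le_max_right _ _, fun j => ?_⟩
      have hj := hk₀ j (Finset.mem_univ j)
      have : -z j ≤ -z k₀ := by linarith
      calc (0:ℝ) - z j = -z j := by ring
        _ ≤ max (-z k₀) 0 := this.trans (le_max_left _ _)
    have : psiLoss z > 0 := by
      simp only [psiLoss]
      rcases le_total (z k₀) 0 with hc0 | hc0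
      · rw [max_eq_left (by linarith)] at h0; linarith
      · rw [max_eq_right (by linarith)] at h0; linarith
    linarith
  · intro h
    have h1 : Tgen 1 z ≤ 0 := tgen_le.mpr ⟨le_rfl, fun k => by have := h k; linarith⟩
    have h0 : Tgen 0 z ≤ 0 := tgen_le.mpr ⟨le_rfl, fun k => by have := h k; linarith⟩
    have := tgen_nonneg (s := (1:ℝ)) (z := z)
    have := tgen_nonneg (s := (0:ℝ)) (z := z)
    simp only [psiLoss]; linarith

lemma psi_eq_one {K : ℕ} {z : Fin K → ℝ} (k : Fin K) (hk : z k ≤ 0) : psiLoss z = 1 := by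
  have h1 : 1 ≤ Tgen 1 z := (by linarith : (1:ℝ) ≤ 1 - z k).trans (sub_le_tgen k)
  have h : Tgen 0 z ≤ Tgen 1 z - 1 := by
    rw [tgen_le]
    refine ⟨by linarith, fun j => ?_⟩
    have := sub_le_tgen (s := (1:ℝ)) (z := z) j
    linarith
  have := psi_le_one (z := z)
  simp only [psiLoss] at *
  linarith

lemma neg_mem_signVecs {K : ℕ} {a : Fin K → ℝ} (h : a ∈ signVecs K) :
    (fun k => -a k) ∈ signVecs K := by
  rw [mem_signVecs] at h ⊢
  intro k
  rcases h k with h1 | h1 <;> simp [h1]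

lemma card_signVecs (K : ℕ) : (signVecs K).card = 2 ^ K := by
  classical
  rw [signVecs, Finset.card_image_of_injective _ ?_, Finset.card_univ]
  · simp
  · intro b b' h
    funext k
    have := congrFun h k
    by_cases hb : b k <;> by_cases hb' : b' k <;> simp [hb, hb'] at this ⊢
    all_goals norm_num at this

lemma exists_nonpos {K : ℕ} {a b z : Fin K → ℝ} (ha : a ∈ signVecs K)
    (hb : b ∈ signVecs K) (hab : a ≠ b) (hz : ∀ k, 0 < a k * z k) :
    ∃ k, b k * z k ≤ 0 := by
  rw [mem_signVecs] at ha hb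
  have : ∃ k, a k ≠ b k := by
    by_contra hc
    push_neg at hc
    exact hab (funext hc)
  obtain ⟨k, hk⟩ := this
  have hbk : b k = -a k := by
    rcases ha k with h1 | h1 <;> rcases hb k with h2 | h2 <;>
      rw [h1, h2] at hk ⊢ <;> norm_num at hk <;> norm_num
  exact ⟨k, by rw [hbk]; nlinarith [hz k]⟩

lemma pointwise_main {K : ℕ} (hK : 1 ≤ K) (c : (Fin K → ℝ) → ℝ)
    (hsum : ∑ a ∈ signVecs K, c a = 0)
    {a₀ : Fin K → ℝ} (ha₀ : a₀ ∈ signVecs K)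
    (hlt : ∀ a ∈ signVecs K, a ≠ a₀ → c a < c a₀) (z : Fin K → ℝ) :
    -c a₀ ≤ ∑ a ∈ signVecs K, c a * psiLoss (fun k => a k * z k) ∧
    ((-c a₀ = ∑ a ∈ signVecs K, c a * psiLoss (fun k => a k * z k)) ↔
      ∀ k, 1 ≤ a₀ k * z k) := by
  classical
  set S := signVecs K with hS
  have hk0 : (0 : ℕ) < K := hK
  let b : Fin K → ℝ := fun k => -a₀ k
  have hbS : b ∈ S := neg_mem_signVecs ha₀
  have hba₀ : b ≠ a₀ := by
    intro h
    have := congrFun h ⟨0, hk0⟩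
    rcases (mem_signVecs a₀).mp ha₀ ⟨0, hk0⟩ with h1 | h1 <;>
      simp [b, h1] at this <;> linarith
  have hpos : 0 < c a₀ := by
    by_contra hc
    push_neg at hc
    have herase : ∑ a ∈ S.erase a₀, c a < 0 := by
      apply Finset.sum_neg
      · intro a ha
        have := hlt a (Finset.mem_of_mem_erase ha) (Finset.ne_of_mem_erase ha)
        linarith
      · exact ⟨b, Finset.mem_erase.mpr ⟨hba₀, hbS⟩⟩
    have := Finset.add_sum_erase S c ha₀
    rw [hsum] at this
    linarith
  have hrw : ∑ a ∈ S, c a * psiLoss (fun k => a k * z k)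
      = ∑ a ∈ S, c a * (psiLoss (fun k => a k * z k) - 1) := by
    simp only [mul_sub, mul_one, Finset.sum_sub_distrib, hsum, sub_zero]
  by_cases h1 : ∀ k, 0 < a₀ k * z k
  · have hsingle : ∑ a ∈ S, c a * (psiLoss (fun k => a k * z k) - 1)
        = c a₀ * (psiLoss (fun k => a₀ k * z k) - 1) := by
      apply Finset.sum_eq_single_of_mem a₀ ha₀
      intro a haS hane
      obtain ⟨k, hk⟩ := exists_nonpos ha₀ haS (Ne.symm hane) h1
      rw [psi_eq_one k hk]
      ring
    rw [hrw, hsingle]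
    have hψ0 : 0 ≤ psiLoss (fun k => a₀ k * z k) := psi_nonneg
    constructor
    · nlinarith
    · constructor
      · intro h
        rw [← psi_eq_zero_iff (z := fun k => a₀ k * z k)]
        nlinarith
      · intro h
        rw [psi_eq_zero_iff.mpr h]
        ring
  · push_neg at h1
    obtain ⟨k₁, hk₁⟩ := h1
    have hstrict : -c a₀ < ∑ a ∈ S, c a * (psiLoss (fun k => a k * z k) - 1) := by
      by_cases h2 : ∀ a ∈ S, psiLoss (fun k => a k * z k) = 1
      · have : ∑ a ∈ S, c a * (psiLoss (fun k => a k * z k) - 1) = 0 := by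
          apply Finset.sum_eq_zero
          intro a ha
          rw [h2 a ha]; ring
        rw [this]; linarith
      · push_neg at h2
        obtain ⟨a', ha'S, ha'ne⟩ := h2
        have hψlt : psiLoss (fun k => a' k * z k) < 1 :=
          lt_of_le_of_ne psi_le_one ha'ne
        have hposz : ∀ k, 0 < a' k * z k := by
          intro k
          by_contra hc
          push_neg at hc
          exact absurd (psi_eq_one k hc) ha'ne
        have ha'a₀ : a' ≠ a₀ := by
          intro h
          rw [h] at hposz
          exact absurd (hposz k₁) (not_lt.mpr hk₁)
        have hsingle : ∑ a ∈ S, c a * (psiLoss (fun k => a k * z k) - 1)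
            = c a' * (psiLoss (fun k => a' k * z k) - 1) := by
          apply Finset.sum_eq_single_of_mem a' ha'S
          intro a haS hane
          obtain ⟨k, hk⟩ := exists_nonpos ha'S haS (Ne.symm hane) hposz
          rw [psi_eq_one k hk]; ring
        rw [hsingle]
        have hlt' := hlt a' ha'S ha'a₀
        have hψ0 : 0 ≤ psiLoss (fun k => a' k * z k) := psi_nonneg
        rcases le_or_gt 0 (c a') with hc' | hc'
        · nlinarith
        · nlinarith
    refine ⟨by rw [hrw]; linarith, ?_⟩
    constructor
    · intro h
      rw [hrw] at h
      linarith
    · intro h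
      exact absurd (hk₁.trans_lt (by linarith [h k₁])) (lt_irrefl _)

lemma continuous_psi {K : ℕ} : Continuous fun z : Fin K → ℝ => psiLoss z := by
  have htg : ∀ s : ℝ, Continuous fun z : Fin K → ℝ => Tgen s z := by
    intro s
    suffices h : ∀ t : Finset (Fin K),
        Continuous fun z : Fin K → ℝ => t.fold (· ⊔ ·) (0:ℝ) (fun k => s - z k) from h _
    intro t
    induction t using Finset.induction_on with
    | empty => simpa using continuous_const
    | insert _ _ hnm ih =>
      rename_i a t'
      simp only [Finset.fold_insert hnm]
      exact (continuous_const.sub (continuous_apply a)).max ih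
  exact (htg 1).sub (htg 0)

end Aux

open MeasureTheory in
theorem stmt17 (K : ℕ) (hK : 1 ≤ K) {X : Type*} [MeasurableSpace X]
    (μ : Measure X) (W : X → (Fin K → ℝ) → ℝ)
    (hWmeas : ∀ a ∈ signVecs K, Measurable fun x => W x a)
    (hWint : ∀ a ∈ signVecs K, Integrable (fun x => W x a) μ)
    -- `Wbar x` is the average weight over the `2 ^ K` treatments
    (Wbar : X → ℝ) (hWbar : Wbar = fun x => (∑ a ∈ signVecs K, W x a) / 2 ^ K)
    -- a.e., `a₀ x` is the unique maximizer of `a ↦ W x a`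
    (a₀ : X → Fin K → ℝ) (ha₀ : Measurable a₀)
    (hmax : ∀ᵐ x ∂μ, a₀ x ∈ signVecs K
        ∧ ∀ a ∈ signVecs K, a ≠ a₀ x → W x a < W x (a₀ x)) :
    ∀ f : X → Fin K → ℝ, Measurable f →
      Integrable
        (fun x => ∑ a ∈ signVecs K, (W x a - Wbar x) * psiLoss (fun k => a k * f x k)) μ →
      -- the residual-weighted ψ-risk is bounded below by its Bayes value …
      ((∫ x, ((∑ a ∈ signVecs K, (W x a - Wbar x)) - (W x (a₀ x) - Wbar x)) ∂μ)
          ≤ ∫ x, (∑ a ∈ signVecs K, (W x a - Wbar x) * psiLoss (fun k => a k * f x k)) ∂μ)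
      ∧
      -- … with equality iff a.e. `a₀ x k * f x k ≥ 1` for all `k` …
      (((∫ x, (∑ a ∈ signVecs K, (W x a - Wbar x) * psiLoss (fun k => a k * f x k)) ∂μ)
            = ∫ x, ((∑ a ∈ signVecs K, (W x a - Wbar x)) - (W x (a₀ x) - Wbar x)) ∂μ)
          ↔ (∀ᵐ x ∂μ, ∀ k, 1 ≤ a₀ x k * f x k))
      ∧
      -- … and any minimizer `f` of the residual-weighted ψ-risk has `sign (f x) = a₀ x` a.e.
      ((∀ g : X → Fin K → ℝ, Measurable g →
          Integrable
            (fun x => ∑ a ∈ signVecs K, (W x a - Wbar x) * psiLoss (fun k => a k * g x k)) μ →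
          (∫ x, (∑ a ∈ signVecs K, (W x a - Wbar x) * psiLoss (fun k => a k * f x k)) ∂μ)
            ≤ ∫ x, (∑ a ∈ signVecs K, (W x a - Wbar x) * psiLoss (fun k => a k * g x k)) ∂μ) →
        ∀ᵐ x ∂μ, ∀ k, Real.sign (f x k) = a₀ x k) := by
  classical
  have hWbarMeas : Measurable Wbar := by
    rw [hWbar]
    exact (Finset.measurable_sum _ fun a ha => hWmeas a ha).div_const _
  have hWbarInt : Integrable Wbar μ := by
    rw [hWbar]
    exact (integrable_finset_sum _ fun a ha => hWint a ha).div_const _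
  have hzero : ∀ x, ∑ a ∈ signVecs K, (W x a - Wbar x) = 0 := by
    intro x
    rw [hWbar]
    rw [Finset.sum_sub_distrib, Finset.sum_const, card_signVecs, nsmul_eq_mul]
    push_cast
    field_simp
    ring
  have hWA_int : Integrable (fun x => W x (a₀ x)) μ := by
    have h_eq : (fun x => ∑ a ∈ signVecs K, Set.indicator (a₀ ⁻¹' {a}) (fun x => W x a) x)
        =ᵐ[μ] (fun x => W x (a₀ x)) := by
      filter_upwards [hmax] with x hx
      simp only [Set.indicator_apply, Set.mem_preimage, Set.mem_singleton_iff]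
      rw [Finset.sum_ite_eq (signVecs K) (a₀ x) (fun a => W x a)]
      simp [hx.1]
    exact (integrable_finset_sum _ fun a ha =>
      (hWint a ha).indicator (ha₀ (measurableSet_singleton a))).congr h_eq
  have hBfun : (fun x => (∑ a ∈ signVecs K, (W x a - Wbar x)) - (W x (a₀ x) - Wbar x))
      = fun x => Wbar x - W x (a₀ x) := by
    funext x; rw [hzero x]; ring
  have hgInt : Integrable (fun x => Wbar x - W x (a₀ x)) μ := hWbarInt.sub hWA_int
  have hB : ∫ x, ((∑ a ∈ signVecs K, (W x a - Wbar x)) - (W x (a₀ x) - Wbar x)) ∂μ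
      = ∫ x, (Wbar x - W x (a₀ x)) ∂μ := by rw [hBfun]
  have hpt : ∀ (f : X → Fin K → ℝ), ∀ᵐ x ∂μ,
      (Wbar x - W x (a₀ x)
          ≤ ∑ a ∈ signVecs K, (W x a - Wbar x) * psiLoss (fun k => a k * f x k)) ∧
      ((Wbar x - W x (a₀ x)
          = ∑ a ∈ signVecs K, (W x a - Wbar x) * psiLoss (fun k => a k * f x k)) ↔
        ∀ k, 1 ≤ a₀ x k * f x k) := by
    intro f
    filter_upwards [hmax] with x hx
    have h := pointwise_main hK (fun a => W x a - Wbar x) (hzero x) hx.1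
      (fun a haS hne => sub_lt_sub_right (hx.2 a haS hne) _) (f x)
    rw [neg_sub] at h
    exact h
  have key : ∀ (f : X → Fin K → ℝ),
      Integrable
        (fun x => ∑ a ∈ signVecs K, (W x a - Wbar x) * psiLoss (fun k => a k * f x k)) μ →
      ((∫ x, ((∑ a ∈ signVecs K, (W x a - Wbar x)) - (W x (a₀ x) - Wbar x)) ∂μ)
          ≤ ∫ x, (∑ a ∈ signVecs K, (W x a - Wbar x) * psiLoss (fun k => a k * f x k)) ∂μ) ∧
      (((∫ x, (∑ a ∈ signVecs K, (W x a - Wbar x) * psiLoss (fun k => a k * f x k)) ∂μ)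
            = ∫ x, ((∑ a ∈ signVecs K, (W x a - Wbar x)) - (W x (a₀ x) - Wbar x)) ∂μ)
          ↔ (∀ᵐ x ∂μ, ∀ k, 1 ≤ a₀ x k * f x k)) := by
    intro f hfi
    have hle : ∫ x, (Wbar x - W x (a₀ x)) ∂μ
        ≤ ∫ x, (∑ a ∈ signVecs K, (W x a - Wbar x) * psiLoss (fun k => a k * f x k)) ∂μ :=
      integral_mono_ae hgInt hfi ((hpt f).mono fun x h => h.1)
    refine ⟨hB ▸ hle, ?_, ?_⟩
    · intro h
      have h0 : ∫ x, ((∑ a ∈ signVecs K, (W x a - Wbar x) * psiLoss (fun k => a k * f x k))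
          - (Wbar x - W x (a₀ x))) ∂μ = 0 := by
        rw [integral_sub hfi hgInt, h, hB]
        ring
      have hnn : 0 ≤ᵐ[μ] fun x =>
          (∑ a ∈ signVecs K, (W x a - Wbar x) * psiLoss (fun k => a k * f x k))
            - (Wbar x - W x (a₀ x)) :=
        (hpt f).mono fun x hx => sub_nonneg.mpr hx.1
      have hz := (integral_eq_zero_iff_of_nonneg_ae hnn (hfi.sub hgInt)).mp h0
      filter_upwards [hz, hpt f] with x h1 h2
      apply h2.2.mp
      have h1' : (∑ a ∈ signVecs K, (W x a - Wbar x) * psiLoss (fun k => a k * f x k))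
          - (Wbar x - W x (a₀ x)) = 0 := h1
      linarith
    · intro hae
      have hcong : (fun x => ∑ a ∈ signVecs K, (W x a - Wbar x)
            * psiLoss (fun k => a k * f x k))
          =ᵐ[μ] fun x => Wbar x - W x (a₀ x) := by
        filter_upwards [hpt f, hae] with x h1 h2
        exact (h1.2.mpr h2).symm
      rw [integral_congr_ae hcong, hB]
  intro f hfm hfi
  obtain ⟨hpart1, hpart2⟩ := key f hfi
  refine ⟨hpart1, hpart2, ?_⟩
  intro hmin
  have ha₀int : Integrable
      (fun x => ∑ a ∈ signVecs K, (W x a - Wbar x) * psiLoss (fun k => a k * a₀ x k)) μ := by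
    apply integrable_finset_sum
    intro a haS
    have hm : Measurable fun x => psiLoss (fun k => a k * a₀ x k) :=
      continuous_psi.measurable.comp (measurable_pi_lambda _ fun k =>
        measurable_const.mul ((measurable_pi_apply k).comp ha₀))
    have hint : Integrable (fun x => W x a - Wbar x) μ := (hWint a haS).sub hWbarInt
    apply hint.mono (((hWmeas a haS).sub hWbarMeas).mul hm).aestronglyMeasurable
    filter_upwards with x
    show ‖(W x a - Wbar x) * psiLoss (fun k => a k * a₀ x k)‖ ≤ _
    rw [norm_mul]
    have h1 : ‖psiLoss (fun k => a k * a₀ x k)‖ ≤ 1 := by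
      rw [Real.norm_eq_abs, abs_le]
      exact ⟨by linarith [psi_nonneg (z := fun k => a k * a₀ x k)], psi_le_one⟩
    exact mul_le_of_le_one_right (norm_nonneg _) h1
  have hmle := hmin a₀ ha₀ ha₀int
  have ha₀sq : ∀ᵐ x ∂μ, ∀ k, 1 ≤ a₀ x k * a₀ x k := by
    filter_upwards [hmax] with x hx k
    rcases (mem_signVecs _).mp hx.1 k with h | h <;> rw [h] <;> norm_num
  have hEqa₀ := (key a₀ ha₀int).2.mpr ha₀sq
  have hEq : (∫ x, (∑ a ∈ signVecs K, (W x a - Wbar x) * psiLoss (fun k => a k * f x k)) ∂μ)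
      = ∫ x, ((∑ a ∈ signVecs K, (W x a - Wbar x)) - (W x (a₀ x) - Wbar x)) ∂μ :=
    le_antisymm (le_of_le_of_eq hmle hEqa₀) hpart1
  have hff := hpart2.mp hEq
  filter_upwards [hff, hmax] with x h1 h2 k
  rcases (mem_signVecs _).mp h2.1 k with h | h
  · have hk := h1 k
    rw [h, one_mul] at hk
    rw [Real.sign_of_pos (by linarith), h]
  · have hk := h1 k
    rw [h] at hk
    have : f x k < 0 := by nlinarith
    rw [Real.sign_of_neg this, h]
end
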